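/- Let G be a finite group, O a disklike transfer system on G, and M the maximal compatible transfer system of O. Then a transfer e = (K → H) ∈ O belongs to M if and only if for every transfer r ∈ O with r ≺ e (r is a cover in the restriction order), r belongs to M and r is a compatibility success for e, i.e., writing r = ((K ∩ I) → I), the membership (K ∩ I) → K ∈ O implies I → H ∈ O. -/

import Mathlib

/-- A transfer system on a group `G`: a binary relation on subgroups refining
inclusion, which is reflexive, closed under conjugation, restriction, and
composition. -/
structure TransferSystem (G : Type*) [Group G] where
  rel : Subgroup G → Subgroup G → Prop
  le_of_rel : ∀ {K H : Subgroup G}, rel K H → K ≤ H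
  refl : ∀ H : Subgroup G, rel H H
  conj : ∀ {K H : Subgroup G} (g : G), rel K H →
    rel (K.map (MulAut.conj g).toMonoidHom) (H.map (MulAut.conj g).toMonoidHom)
  restrict : ∀ {K H : Subgroup G} (L : Subgroup G), rel K H → L ≤ H → rel (K ⊓ L) L
  comp : ∀ {L K H : Subgroup G}, rel L K → rel K H → rel L H

/-- The pair `(Oa, Om)` of transfer systems is compatible. -/
def TransferSystem.Compatible {G : Type*} [Group G] (Oa Om : TransferSystem G) : Prop :=
  (∀ K H : Subgroup G, Om.rel K H → Oa.rel K H) ∧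
  ∀ K J H : Subgroup G, J ≤ H → Om.rel K H → Oa.rel (K ⊓ J) K → Oa.rel J H

/-- `M` is the maximal compatible transfer system of `O`. -/
def TransferSystem.IsMaxCompatible {G : Type*} [Group G] (O M : TransferSystem G) : Prop :=
  O.Compatible M ∧
  ∀ Om : TransferSystem G, O.Compatible Om → ∀ K H : Subgroup G, Om.rel K H → M.rel K H

/-- `T` is the transfer system generated by the binary relation `B`, i.e. the
smallest transfer system containing `B`. -/
def TransferSystem.IsGeneratedBy {G : Type*} [Group G] (T : TransferSystem G)
    (B : Subgroup G → Subgroup G → Prop) : Prop :=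
  (∀ K H : Subgroup G, B K H → T.rel K H) ∧
  ∀ T' : TransferSystem G, (∀ K H : Subgroup G, B K H → T'.rel K H) →
    ∀ K H : Subgroup G, T.rel K H → T'.rel K H

/-- The single transfer `K → H` is compatible with `Oa`. -/
def TransferSystem.EdgeCompatible {G : Type*} [Group G] (Oa : TransferSystem G)
    (K H : Subgroup G) : Prop :=
  ∀ J : Subgroup G, J ≤ H → Oa.rel (K ⊓ J) K → Oa.rel J H

/-- A transfer system is saturated. -/
def TransferSystem.Saturated {G : Type*} [Group G] (O : TransferSystem G) : Prop :=
  ∀ L K H : Subgroup G, L ≤ K → K ≤ H → O.rel L H → O.rel K H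

/-- A transfer system is disklike: every transfer is a restriction of a
transfer to the full group. -/
def TransferSystem.Disklike {G : Type*} [Group G] (O : TransferSystem G) : Prop :=
  ∀ K H : Subgroup G, O.rel K H → ∃ L : Subgroup G, O.rel L ⊤ ∧ K = L ⊓ H

/-- `r` is a proper restriction of `e` in the restriction order on transfers,
viewed as pairs of subgroups. -/
def RestrLt {G : Type*} [Group G] (r e : Subgroup G × Subgroup G) : Prop :=
  ∃ I : Subgroup G, I < e.2 ∧ r = (e.1 ⊓ I, I)

/-- `r ≺ e`: `r` is covered by `e` in the restriction order on transfers of `O`. -/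
def RestrCovBy {G : Type*} [Group G] (O : TransferSystem G)
    (r e : Subgroup G × Subgroup G) : Prop :=
  RestrLt r e ∧
    ¬ ∃ q : Subgroup G × Subgroup G, O.rel q.1 q.2 ∧ RestrLt r q ∧ RestrLt q e

/-- The binary relation `p⁻¹O` on subgroups of `G`, for `O` a transfer system
on `G ⧸ N`. -/
def preimageRel {G : Type*} [Group G] (N : Subgroup G) [N.Normal]
    (O : TransferSystem (G ⧸ N)) : Subgroup G → Subgroup G → Prop :=
  fun A B => ∃ K H : Subgroup (G ⧸ N), O.rel K H ∧
    A = Subgroup.comap (QuotientGroup.mk' N) K ∧ B = Subgroup.comap (QuotientGroup.mk' N) H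

section Aux

variable {G : Type*} [Group G]

/-- Conjugation of a subgroup, as used in the `conj` axiom of transfer systems. -/
def cmap (g : G) (X : Subgroup G) : Subgroup G :=
  X.map (MulAut.conj g).toMonoidHom

lemma mem_cmap {g x : G} {X : Subgroup G} :
    x ∈ cmap g X ↔ ∃ y ∈ X, g * y * g⁻¹ = x := by
  simp [cmap, Subgroup.mem_map, MulAut.conj]

lemma cmap_cmap (a b : G) (X : Subgroup G) :
    cmap a (cmap b X) = cmap (a * b) X := by
  ext x
  simp only [mem_cmap]
  constructor
  · rintro ⟨y, ⟨z, hz, rfl⟩, rfl⟩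
    exact ⟨z, hz, by group⟩
  · rintro ⟨z, hz, rfl⟩
    exact ⟨b * z * b⁻¹, ⟨z, hz, rfl⟩, by group⟩

lemma cmap_one (X : Subgroup G) : cmap 1 X = X := by
  ext x; simp [mem_cmap]

lemma cmap_cmap_inv (g : G) (X : Subgroup G) : cmap g (cmap g⁻¹ X) = X := by
  rw [cmap_cmap, mul_inv_cancel, cmap_one]

lemma cmap_inv_cmap (g : G) (X : Subgroup G) : cmap g⁻¹ (cmap g X) = X := by
  rw [cmap_cmap, inv_mul_cancel, cmap_one]

lemma cmap_mono (g : G) {A B : Subgroup G} (h : A ≤ B) :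
    cmap g A ≤ cmap g B := Subgroup.map_mono h

lemma cmap_inf (g : G) (A B : Subgroup G) :
    cmap g (A ⊓ B) = cmap g A ⊓ cmap g B := by
  ext x
  simp only [mem_cmap, Subgroup.mem_inf]
  constructor
  · rintro ⟨y, ⟨h1, h2⟩, rfl⟩
    exact ⟨⟨y, h1, rfl⟩, ⟨y, h2, rfl⟩⟩
  · rintro ⟨⟨y, h1, rfl⟩, ⟨z, h2, hz⟩⟩
    have hzy : z = y := mul_left_cancel (mul_right_cancel hz)
    subst hzy
    exact ⟨z, ⟨h1, h2⟩, rfl⟩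

lemma TransferSystem.conj' (O : TransferSystem G) {K H : Subgroup G} (g : G)
    (h : O.rel K H) : O.rel (cmap g K) (cmap g H) :=
  O.conj g h

lemma TransferSystem.edgeCompatible_comp (O : TransferSystem G) {A B C : Subgroup G}
    (hAB : A ≤ B) (h1 : O.EdgeCompatible A B) (h2 : O.EdgeCompatible B C) :
    O.EdgeCompatible A C := by
  intro J hJC hAJ
  refine h2 J hJC (h1 (B ⊓ J) inf_le_left ?_)
  rwa [← inf_assoc, inf_eq_left.mpr hAB]

lemma TransferSystem.edgeCompatible_cmap (O : TransferSystem G) {A B : Subgroup G}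
    (g : G) (h : O.EdgeCompatible A B) :
    O.EdgeCompatible (cmap g A) (cmap g B) := by
  intro J hJ hOJ
  set J₀ := cmap g⁻¹ J with hJ₀
  have hJeq : J = cmap g J₀ := by rw [hJ₀, cmap_cmap_inv]
  have hJ₀B : J₀ ≤ B := by
    have := cmap_mono g⁻¹ hJ
    rwa [cmap_inv_cmap] at this
  have hOJ' : O.rel (A ⊓ J₀) A := by
    have := O.conj' g⁻¹ hOJ
    rwa [hJeq, ← cmap_inf, cmap_inv_cmap, cmap_inv_cmap] at this
  have := O.conj' g (h J₀ hJ₀B hOJ')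
  rwa [← hJeq] at this

/-- The candidate maximal compatible transfer system for `O`. -/
def TransferSystem.maxTS (O : TransferSystem G) : TransferSystem G where
  rel K H := O.rel K H ∧
    ∀ (g : G) (I : Subgroup G), I ≤ H → O.EdgeCompatible (cmap g (K ⊓ I)) (cmap g I)
  le_of_rel h := O.le_of_rel h.1
  refl H := by
    refine ⟨O.refl H, fun g I hIH => ?_⟩
    rw [inf_eq_right.mpr hIH]
    intro J hJ hOJ
    rwa [inf_eq_right.mpr hJ] at hOJ
  conj := by
    rintro K H g₀ ⟨hO, hEC⟩
    refine ⟨O.conj g₀ hO, fun g I hIH => ?_⟩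
    set I₀ := cmap g₀⁻¹ I with hI₀def
    have hIeq : I = cmap g₀ I₀ := by rw [hI₀def, cmap_cmap_inv]
    have hI₀H : I₀ ≤ H := by
      have := cmap_mono g₀⁻¹ hIH
      rwa [show (H.map (MulAut.conj g₀).toMonoidHom) = cmap g₀ H from rfl,
        cmap_inv_cmap] at this
    have h := hEC (g * g₀) I₀ hI₀H
    have e1 : cmap g (K.map (MulAut.conj g₀).toMonoidHom ⊓ I) = cmap (g * g₀) (K ⊓ I₀) := by
      rw [hIeq, show (K.map (MulAut.conj g₀).toMonoidHom) = cmap g₀ K from rfl,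
        ← cmap_inf, cmap_cmap]
    have e2 : cmap g I = cmap (g * g₀) I₀ := by rw [hIeq, cmap_cmap]
    rwa [← e1, ← e2] at h
  restrict := by
    rintro K H L ⟨hO, hEC⟩ hLH
    refine ⟨O.restrict L hO hLH, fun g I hIL => ?_⟩
    have : K ⊓ L ⊓ I = K ⊓ I := by
      rw [inf_assoc, inf_eq_right.mpr hIL]
    rw [this]
    exact hEC g I (hIL.trans hLH)
  comp := by
    rintro L K H ⟨hOL, hECL⟩ ⟨hOK, hECK⟩
    refine ⟨O.comp hOL hOK, fun g I hIH => ?_⟩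
    have hLK : L ≤ K := O.le_of_rel hOL
    have h1 := hECL g (K ⊓ I) inf_le_left
    have e1 : L ⊓ (K ⊓ I) = L ⊓ I := by
      rw [← inf_assoc, inf_eq_left.mpr hLK]
    rw [e1] at h1
    exact O.edgeCompatible_comp (cmap_mono g (inf_le_inf_right I hLK)) h1 (hECK g I hIH)

lemma TransferSystem.compatible_maxTS (O : TransferSystem G) :
    O.Compatible O.maxTS := by
  constructor
  · exact fun K H h => h.1
  · rintro K J H hJH ⟨hO, hEC⟩ hOa
    have h := hEC 1 H le_rfl
    rw [inf_eq_left.mpr (O.le_of_rel hO), cmap_one, cmap_one] at h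
    exact h J hJH hOa

lemma TransferSystem.maxTS_isMax (O : TransferSystem G) (Om : TransferSystem G)
    (hc : O.Compatible Om) {K H : Subgroup G} (h : Om.rel K H) : O.maxTS.rel K H := by
  refine ⟨hc.1 K H h, fun g I hIH => ?_⟩
  have hr : Om.rel (cmap g (K ⊓ I)) (cmap g I) := Om.conj' g (Om.restrict I h hIH)
  intro J hJ hOJ
  exact hc.2 _ J _ hJ hr hOJ

lemma exists_coatom_between {G : Type*} [Group G] [Finite G] {J H : Subgroup G}
    (h : J < H) :
    ∃ I : Subgroup G, J ≤ I ∧ I < H ∧ ∀ X : Subgroup G, I < X → ¬ X < H := by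
  obtain ⟨I, hIs, hImax⟩ := Set.Finite.exists_maximalFor id
    {X : Subgroup G | J ≤ X ∧ X < H} (Set.toFinite _) ⟨J, le_refl J, h⟩
  exact ⟨I, hIs.1, hIs.2, fun X hIX hXH =>
    hIX.not_ge (hImax (j := X) ⟨hIs.1.trans hIX.le, hXH⟩ hIX.le)⟩

end Aux

/-- for a disklike `O`, a transfer `e = (K → H) ∈ O` belongs to
`M(O)` iff every transfer `r ∈ O` with `r ≺ e` in the restriction order belongs
to `M(O)` and is a compatibility success for `e`. -/
theorem stmt_11 {G : Type*} [Group G] [Finite G] (O M : TransferSystem G)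
    (hd : O.Disklike) (hM : O.IsMaxCompatible M) (K H : Subgroup G) (hKH : O.rel K H) :
    M.rel K H ↔
      ∀ r : Subgroup G × Subgroup G, O.rel r.1 r.2 → RestrCovBy O r (K, H) →
        M.rel r.1 r.2 ∧ (O.rel r.1 K → O.rel r.2 H) := by
  have hM_ec : ∀ A B : Subgroup G, M.rel A B → O.EdgeCompatible A B :=
    fun A B h J hJ hO => hM.1.2 A J B hJ h hO
  constructor
  · -- forward
    intro hMKH r hOr hrc
    obtain ⟨⟨I, hI, hre⟩, _⟩ := hrc
    subst hre
    exact ⟨M.restrict I hMKH hI.le, fun h1 => hM.1.2 K I H hI.le hMKH h1⟩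
  · -- backward
    intro hr
    -- covers in the restriction order are exactly coatoms below H
    have hcov : ∀ I : Subgroup G, I < H → (∀ X : Subgroup G, I < X → ¬ X < H) →
        M.rel (K ⊓ I) I ∧ (O.rel (K ⊓ I) K → O.rel I H) := by
      intro I hI hmax
      refine hr (K ⊓ I, I) (O.restrict I hKH hI.le) ⟨⟨I, hI, rfl⟩, ?_⟩
      rintro ⟨q, hq, ⟨I₁, hI₁, hrq⟩, ⟨I₂, hI₂, hqe⟩⟩
      have hq2 : q.2 = I₂ := by rw [hqe]
      have hI1I : I₁ = I := by
        have := congrArg Prod.snd hrq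
        simpa using this.symm
      rw [hq2] at hI₁
      rw [hI1I] at hI₁
      exact hmax I₂ hI₁ hI₂
    -- (†) : transfers between K-intersections below proper subgroups lift
    have dagger : ∀ J' J'' : Subgroup G, J' ≤ J'' → J'' < H →
        O.rel (K ⊓ J') (K ⊓ J'') → O.rel J' J'' := by
      intro J' J'' h1 h2 h3
      obtain ⟨I, hJI, hIH, hmax⟩ := exists_coatom_between h2
      have hMc := (hcov I hIH hmax).1
      have hMr : M.rel (K ⊓ J'') J'' := by
        have := M.restrict J'' hMc hJI
        rwa [inf_assoc, inf_eq_right.mpr hJI] at this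
      refine hM_ec _ _ hMr J' h1 ?_
      rwa [inf_assoc, inf_eq_right.mpr h1]
    -- crux: every restriction of (K, H) is edge compatible
    have crux : ∀ I : Subgroup G, I ≤ H → O.EdgeCompatible (K ⊓ I) I := by
      intro I hIH
      rcases eq_or_lt_of_le hIH with heq | hlt
      · -- I = H
        rw [heq, inf_eq_left.mpr (O.le_of_rel hKH)]
        intro J hJH hOJK
        rcases eq_or_lt_of_le hJH with rfl | hJlt
        · exact O.refl J
        · obtain ⟨I₀, hJI₀, hI₀H, hmax⟩ := exists_coatom_between hJlt
          have hKJH : O.rel (K ⊓ J) H := O.comp hOJK hKH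
          obtain ⟨L, hL, hLH⟩ := hd (K ⊓ J) H hKJH
          have hres : ∀ X : Subgroup G, X ≤ H → O.rel (K ⊓ J ⊓ X) X := by
            intro X hX
            have h := O.restrict X hL le_top
            have e : K ⊓ J ⊓ X = L ⊓ X := by
              rw [hLH, inf_assoc, inf_eq_right.mpr hX]
            rwa [← e] at h
          have h1 : O.rel (K ⊓ J) (K ⊓ I₀) := by
            have h := hres (K ⊓ I₀) (inf_le_right.trans hI₀H.le)
            rwa [inf_eq_left.mpr (le_inf inf_le_left (inf_le_right.trans hJI₀))] at h
          have h2 : O.rel J I₀ := dagger J I₀ hJI₀ hI₀H h1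
          obtain ⟨L₂, hL₂, hJL₂⟩ := hd J I₀ h2
          have hJsH : O.rel (L₂ ⊓ H) H := O.restrict H hL₂ le_top
          have hJJs : J ≤ L₂ ⊓ H := by
            rw [hJL₂]; exact inf_le_inf_left L₂ hI₀H.le
          rcases eq_or_lt_of_le (inf_le_right : L₂ ⊓ H ≤ H) with hJs | hJs
          · -- L₂ ⊓ H = H, so J = I₀ is a coatom
            have hJI : J = I₀ := by
              have e : L₂ ⊓ H ⊓ I₀ = L₂ ⊓ I₀ := by
                rw [inf_assoc, inf_eq_right.mpr hI₀H.le]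
              rw [hJL₂, ← e, hJs, inf_eq_right.mpr hI₀H.le]
            rw [hJI]
            exact (hcov I₀ hI₀H hmax).2 (by rwa [hJI] at hOJK)
          · -- L₂ ⊓ H < H
            have h3 : O.rel (K ⊓ J) (K ⊓ (L₂ ⊓ H)) := by
              have h := hres (K ⊓ (L₂ ⊓ H)) (inf_le_right.trans inf_le_right)
              rwa [inf_eq_left.mpr (le_inf inf_le_left (inf_le_right.trans hJJs))] at h
            exact O.comp (dagger J (L₂ ⊓ H) hJJs hJs h3) hJsH
      · -- I < H
        obtain ⟨I₀, hII₀, hI₀H, hmax⟩ := exists_coatom_between hlt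
        have hMc := (hcov I₀ hI₀H hmax).1
        have hMr : M.rel (K ⊓ I) I := by
          have := M.restrict I hMc hII₀
          rwa [inf_assoc, inf_eq_right.mpr hII₀] at this
        exact hM_ec _ _ hMr
    refine hM.2 O.maxTS O.compatible_maxTS K H ⟨hKH, fun g I hIH => ?_⟩
    exact O.edgeCompatible_cmap g (crux I hIH)
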